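/- Let I be the left ideal of R<x,x*> generated by a single (not necessarily homogeneous) polynomial p. Then I is real if and only if there is no polynomial q with deg(q) < deg(p) such that qp + p*q* is a nonzero sum of squares. -/

import Mathlib

open scoped BigOperators

noncomputable section

/-- The free real *-algebra on `g` variables `x₁,…,x_g` and their formal adjoints
`x₁*,…,x_g*`, modeled as the monoid algebra of the free monoid on `2g` letters,
where `Sum.inl i` is `xᵢ` and `Sum.inr i` is `xᵢ*`. -/
abbrev FreeStarAlg (g : ℕ) := MonoidAlgebra ℝ (FreeMonoid (Fin g ⊕ Fin g))

namespace FreeStarAlg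

variable {g : ℕ}

/-- The involution on words: reverse the word and star each letter. -/
def starWord (w : FreeMonoid (Fin g ⊕ Fin g)) : FreeMonoid (Fin g ⊕ Fin g) :=
  FreeMonoid.ofList (((FreeMonoid.toList w).map Sum.swap).reverse)

/-- The involution `p ↦ p*` on the free *-algebra. -/
def starP (p : FreeStarAlg g) : FreeStarAlg g :=
  MonoidAlgebra.ofCoeff (Finsupp.mapDomain starWord p.coeff)

/-- The monomial corresponding to a word. -/
def mono (w : FreeMonoid (Fin g ⊕ Fin g)) : FreeStarAlg g :=
  MonoidAlgebra.single w 1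

/-- Degree of a noncommutative polynomial. -/
def deg (p : FreeStarAlg g) : ℕ :=
  p.coeff.support.sup fun w => (FreeMonoid.toList w).length

/-- `p` is homogeneous of degree `d`: every word appearing in `p` has length `d`. -/
def IsHom (d : ℕ) (p : FreeStarAlg g) : Prop :=
  ∀ w ∈ p.coeff.support, (FreeMonoid.toList w).length = d

/-- `p` is a (finite) sum of hermitian squares `qᵢ* qᵢ`. -/
def IsSOS (p : FreeStarAlg g) : Prop :=
  ∃ (k : ℕ) (q : Fin k → FreeStarAlg g), p = ∑ i, starP (q i) * q i

/-- Membership in `I + I*`. -/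
def MemIplusIstar (I : Submodule (FreeStarAlg g) (FreeStarAlg g)) (p : FreeStarAlg g) : Prop :=
  ∃ u ∈ I, ∃ v ∈ I, p = u + starP v

/-- A left ideal `I` is real if `∑ aᵢ* aᵢ ∈ I + I*` forces every `aᵢ ∈ I`. -/
def IsRealIdeal (I : Submodule (FreeStarAlg g) (FreeStarAlg g)) : Prop :=
  ∀ (r : ℕ) (a : Fin r → FreeStarAlg g),
    MemIplusIstar I (∑ i, starP (a i) * a i) → ∀ i, a i ∈ I

/-- The left ideal generated by a set `S`. -/
def leftIdealGen (S : Set (FreeStarAlg g)) : Submodule (FreeStarAlg g) (FreeStarAlg g) :=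
  Submodule.span (FreeStarAlg g) S

/-- `p` is irreducible: it cannot be written as a product of two polynomials of
strictly smaller degree. -/
def Irred (p : FreeStarAlg g) : Prop :=
  ¬ ∃ q r : FreeStarAlg g, p = q * r ∧ deg q < deg p ∧ deg r < deg p

/-- `p` is analytic: it contains no starred variables. -/
def IsAnalytic (p : FreeStarAlg g) : Prop :=
  ∀ w ∈ p.coeff.support, ∀ l ∈ FreeMonoid.toList w, l.isLeft

/- ### words -/

abbrev Wrd (g : ℕ) := FreeMonoid (Fin g ⊕ Fin g)

def wlen (w : Wrd g) : ℕ := (FreeMonoid.toList w).length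

@[simp] lemma wlen_mul (u v : Wrd g) : wlen (u * v) = wlen u + wlen v := by
  simp [wlen, FreeMonoid.toList_mul]

@[simp] lemma wlen_one : wlen (1 : Wrd g) = 0 := rfl

@[simp] lemma wlen_starWord (w : Wrd g) : wlen (starWord w) = wlen w := by
  simp [wlen, starWord]

@[simp] lemma starWord_starWord (w : Wrd g) : starWord (starWord w) = w := by
  simp [starWord, List.map_reverse, List.map_map, Sum.swap_swap_eq]

lemma starWord_mul (u v : Wrd g) : starWord (u * v) = starWord v * starWord u := by
  simp [starWord, FreeMonoid.toList_mul]

lemma starWord_injective : Function.Injective (starWord (g := g)) := by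
  intro u v h
  have := congrArg starWord h
  simpa using this

@[simp] lemma starWord_one : starWord (1 : Wrd g) = 1 := rfl

def wtake (n : ℕ) (w : Wrd g) : Wrd g := FreeMonoid.ofList ((FreeMonoid.toList w).take n)
def wdrop (n : ℕ) (w : Wrd g) : Wrd g := FreeMonoid.ofList ((FreeMonoid.toList w).drop n)

@[simp] lemma wtake_mul_wdrop (n : ℕ) (w : Wrd g) : wtake n w * wdrop n w = w := by
  apply FreeMonoid.toList.injective
  simp [wtake, wdrop, FreeMonoid.toList_mul]

lemma wlen_wtake (n : ℕ) (w : Wrd g) : wlen (wtake n w) = min n (wlen w) := by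
  simp [wtake, wlen]

lemma wlen_wdrop (n : ℕ) (w : Wrd g) : wlen (wdrop n w) = wlen w - n := by
  simp [wdrop, wlen]

lemma eq_wtake_of_mul {u v w : Wrd g} (h : u * v = w) : u = wtake (wlen u) w ∧ v = wdrop (wlen u) w := by
  subst h
  constructor <;> apply FreeMonoid.toList.injective <;>
    simp [wtake, wdrop, wlen, FreeMonoid.toList_mul]

/- ### starP -/

lemma starP_coeff (f : FreeStarAlg g) :
    (starP f).coeff = Finsupp.mapDomain starWord f.coeff := rfl

lemma starP_apply (f : FreeStarAlg g) (m : Wrd g) : (starP f).coeff m = f.coeff (starWord m) := by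
  conv_lhs => rw [show m = starWord (starWord m) by simp]
  exact Finsupp.mapDomain_apply starWord_injective f.coeff _

@[simp] lemma starP_add (f h : FreeStarAlg g) : starP (f + h) = starP f + starP h :=
  MonoidAlgebra.coeff_injective (by
    simp only [starP_coeff, MonoidAlgebra.coeff_add, Finsupp.mapDomain_add])

@[simp] lemma starP_zero : starP (0 : FreeStarAlg g) = 0 :=
  MonoidAlgebra.coeff_injective (by
    simp only [starP_coeff, MonoidAlgebra.coeff_zero, Finsupp.mapDomain_zero])

@[simp] lemma starP_sub (f h : FreeStarAlg g) : starP (f - h) = starP f - starP h := by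
  ext m
  simp only [MonoidAlgebra.coeff_sub, Finsupp.sub_apply, starP_apply]

@[simp] lemma starP_neg (f : FreeStarAlg g) : starP (-f) = - starP f := by
  ext m
  simp only [MonoidAlgebra.coeff_neg, Finsupp.neg_apply, starP_apply]

@[simp] lemma starP_smul (c : ℝ) (f : FreeStarAlg g) : starP (c • f) = c • starP f := by
  ext m
  simp only [MonoidAlgebra.coeff_smul, Finsupp.smul_apply, starP_apply]

@[simp] lemma starP_starP (f : FreeStarAlg g) : starP (starP f) = f := by
  ext m; simp [starP_apply]

@[simp] lemma starP_single (w : Wrd g) (c : ℝ) :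
    starP (MonoidAlgebra.single w c) = MonoidAlgebra.single (starWord w) c :=
  MonoidAlgebra.coeff_injective (by
    simp only [starP_coeff, MonoidAlgebra.coeff_single, Finsupp.mapDomain_single])

lemma starP_add' (a b : FreeStarAlg g) :
    starP (g := g) (a + b) = starP a + starP b :=
  starP_add a b

lemma starP_mul (f h : FreeStarAlg g) : starP (f * h) = starP h * starP f := by
  induction f using MonoidAlgebra.induction_linear with
  | zero => simp
  | add a b ha hb => simp [starP_add', add_mul, mul_add, ha, hb]
  | single w c =>
    induction h using MonoidAlgebra.induction_linear with
    | zero => simp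
    | add a b ha hb => simp [starP_add', add_mul, mul_add, ha, hb]
    | single w' c' =>
      rw [MonoidAlgebra.single_mul_single, starP_single, starP_single, starP_single,
        MonoidAlgebra.single_mul_single, starWord_mul, mul_comm]

lemma starP_sum {ι : Type*} (s : Finset ι) (f : ι → FreeStarAlg g) :
    starP (∑ i ∈ s, f i) = ∑ i ∈ s, starP (f i) := by
  classical
  induction s using Finset.induction with
  | empty => simp
  | insert _ _ h ih => simp_all [Finset.sum_insert]

lemma mem_support_starP {f : FreeStarAlg g} {m : Wrd g} :
    m ∈ (starP f).coeff.support ↔ starWord m ∈ f.coeff.support := by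
  simp [Finsupp.mem_support_iff, starP_apply]

lemma starP_injective : Function.Injective (starP (g := g)) := by
  intro a b h
  have := congrArg starP h
  simpa using this

/- ### deg -/

lemma wlen_le_deg {f : FreeStarAlg g} {w : Wrd g} (hw : w ∈ f.coeff.support) : wlen w ≤ deg f :=
  Finset.le_sup (f := fun w => (FreeMonoid.toList w).length) hw

lemma deg_le_iff {f : FreeStarAlg g} {n : ℕ} : deg f ≤ n ↔ ∀ w ∈ f.coeff.support, wlen w ≤ n :=
  Finset.sup_le_iff

lemma deg_lt_iff {f : FreeStarAlg g} {n : ℕ} (hn : 0 < n) :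
    deg f < n ↔ ∀ w ∈ f.coeff.support, wlen w < n :=
  Finset.sup_lt_iff (by exact hn)

lemma exists_wlen_eq_deg {f : FreeStarAlg g} (hf : f ≠ 0) :
    ∃ w ∈ f.coeff.support, wlen w = deg f := by
  obtain ⟨w, hw, he⟩ := Finset.exists_mem_eq_sup f.coeff.support
    (by rw [Finsupp.support_nonempty_iff, Ne, MonoidAlgebra.coeff_eq_zero]; exact hf) (fun w => (FreeMonoid.toList w).length)
  exact ⟨w, hw, he.symm⟩

@[simp] lemma deg_zero : deg (0 : FreeStarAlg g) = 0 := by simp [deg]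

lemma deg_starP (f : FreeStarAlg g) : deg (starP f) = deg f := by
  apply le_antisymm
  · rw [deg_le_iff]; intro w hw
    rw [mem_support_starP] at hw
    simpa using wlen_le_deg hw
  · rw [deg_le_iff]; intro w hw
    have : starWord w ∈ (starP f).coeff.support := by
      rw [mem_support_starP]; simpa using hw
    simpa using wlen_le_deg this

lemma deg_mul_le (f h : FreeStarAlg g) : deg (f * h) ≤ deg f + deg h := by
  classical
  rw [deg_le_iff]; intro w hw
  have := MonoidAlgebra.support_coeff_mul_subset f h hw
  rw [Finset.mem_mul] at this
  obtain ⟨u, hu, v, hv, huv⟩ := this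
  rw [← huv, wlen_mul]
  exact add_le_add (wlen_le_deg hu) (wlen_le_deg hv)

lemma deg_add_le (f h : FreeStarAlg g) : deg (f + h) ≤ max (deg f) (deg h) := by
  classical
  rw [deg_le_iff]; intro w hw
  rw [MonoidAlgebra.coeff_add] at hw
  have := Finsupp.support_add hw
  rw [Finset.mem_union] at this
  rcases this with h' | h'
  · exact le_max_of_le_left (wlen_le_deg h')
  · exact le_max_of_le_right (wlen_le_deg h')

@[simp] lemma deg_neg (f : FreeStarAlg g) : deg (-f) = deg f := by
  have : (-f).coeff.support = f.coeff.support := Finsupp.support_neg f.coeff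
  rw [deg, deg, this]

lemma deg_sub_le (f h : FreeStarAlg g) : deg (f - h) ≤ max (deg f) (deg h) := by
  rw [sub_eq_add_neg]
  simpa using deg_add_le f (-h)

lemma deg_smul_le (c : ℝ) (f : FreeStarAlg g) : deg (c • f) ≤ deg f := by
  rw [deg_le_iff]; intro w hw
  rw [MonoidAlgebra.coeff_smul] at hw
  exact wlen_le_deg (Finsupp.support_smul hw)

lemma deg_single_le (w : Wrd g) (c : ℝ) : deg (MonoidAlgebra.single w c) ≤ wlen w := by
  rw [deg_le_iff]; intro w' hw'
  rw [MonoidAlgebra.coeff_single] at hw'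
  have := Finsupp.support_single_subset hw'
  simp only [Finset.mem_singleton] at this
  subst this; rfl


/- ### length-split coefficient lemma -/

lemma mul_apply_split {f h : FreeStarAlg g} {a b : ℕ} (hf : deg f ≤ a) (hh : deg h ≤ b)
    {m : Wrd g} (hm : wlen m = a + b) :
    (f * h).coeff m = f.coeff (wtake a m) * h.coeff (wdrop a m) := by
  classical
  rw [MonoidAlgebra.coeff_mul]
  rw [Finsupp.sum_eq_single (wtake a m)]
  · rw [Finsupp.sum_eq_single (wdrop a m)]
    · rw [if_pos (wtake_mul_wdrop a m)]
    · intro v hv hvne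
      rw [if_neg]
      intro huv
      have h1 : wlen (wtake a m) = a := by
        rw [wlen_wtake, hm]; exact min_eq_left (Nat.le_add_right a b)
      have := (eq_wtake_of_mul huv).2
      rw [h1] at this
      exact hvne this
    · intro _
      split <;> simp
  · intro u hu hune
    apply Finset.sum_eq_zero
    intro v hv
    dsimp only
    rw [if_neg]
    intro huv
    have h1 : wlen u ≤ a := hf.trans' (wlen_le_deg (Finsupp.mem_support_iff.mpr hu))
    have h2 : wlen v ≤ b := hh.trans' (wlen_le_deg hv)
    have h3 : wlen u + wlen v = a + b := by rw [← wlen_mul, huv, hm]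
    have h4 : wlen u = a := by omega
    have := (eq_wtake_of_mul huv).1
    rw [h4] at this
    exact hune this
  · intro _
    rw [Finsupp.sum]
    apply Finset.sum_eq_zero
    intro v hv
    split <;> simp

lemma mul_apply_maxlen {f h : FreeStarAlg g} {wf wh : Wrd g}
    (hlf : wlen wf = deg f) (hlh : wlen wh = deg h) :
    (f * h).coeff (wf * wh) = f.coeff wf * h.coeff wh := by
  have hm : wlen (wf * wh) = deg f + deg h := by rw [wlen_mul, hlf, hlh]
  rw [mul_apply_split le_rfl le_rfl hm]
  have h1 := (eq_wtake_of_mul (rfl : wf * wh = wf * wh)).1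
  have h2 := (eq_wtake_of_mul (rfl : wf * wh = wf * wh)).2
  rw [hlf] at h1 h2
  rw [← h1, ← h2]

lemma mul_ne_zero_alg {f h : FreeStarAlg g} (hf : f ≠ 0) (hh : h ≠ 0) : f * h ≠ 0 := by
  obtain ⟨wf, hwf, hlf⟩ := exists_wlen_eq_deg hf
  obtain ⟨wh, hwh, hlh⟩ := exists_wlen_eq_deg hh
  intro hz
  have hc := mul_apply_maxlen hlf hlh
  rw [hz] at hc
  simp only [MonoidAlgebra.coeff_zero, Finsupp.coe_zero, Pi.zero_apply] at hc
  exact mul_ne_zero (Finsupp.mem_support_iff.mp hwf) (Finsupp.mem_support_iff.mp hwh) hc.symm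

lemma deg_mul {f h : FreeStarAlg g} (hf : f ≠ 0) (hh : h ≠ 0) :
    deg (f * h) = deg f + deg h := by
  refine le_antisymm (deg_mul_le f h) ?_
  obtain ⟨wf, hwf, hlf⟩ := exists_wlen_eq_deg hf
  obtain ⟨wh, hwh, hlh⟩ := exists_wlen_eq_deg hh
  have hc := mul_apply_maxlen hlf hlh
  have : wf * wh ∈ (f * h).coeff.support := by
    rw [Finsupp.mem_support_iff, hc]
    exact mul_ne_zero (Finsupp.mem_support_iff.mp hwf) (Finsupp.mem_support_iff.mp hwh)
  have := wlen_le_deg this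
  rwa [wlen_mul, hlf, hlh] at this

lemma mul_left_cancel_alg {f a b : FreeStarAlg g} (hf : f ≠ 0) (h : f * a = f * b) : a = b := by
  by_contra hne
  have : f * (a - b) = 0 := by rw [mul_sub, h, sub_self]
  exact mul_ne_zero_alg hf (sub_ne_zero.mpr hne) this

lemma mul_right_cancel_alg {f a b : FreeStarAlg g} (hf : f ≠ 0) (h : a * f = b * f) : a = b := by
  by_contra hne
  have : (a - b) * f = 0 := by rw [sub_mul, h, sub_self]
  exact mul_ne_zero_alg (sub_ne_zero.mpr hne) hf this

/- ### homogeneous components -/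

open Classical in
def comp (n : ℕ) (f : FreeStarAlg g) : FreeStarAlg g :=
  MonoidAlgebra.ofCoeff (f.coeff.filter (fun w => wlen w = n))

lemma comp_apply (n : ℕ) (f : FreeStarAlg g) (w : Wrd g) :
    (comp n f).coeff w = if wlen w = n then f.coeff w else 0 := by
  classical
  rw [comp, MonoidAlgebra.coeff_ofCoeff, Finsupp.filter_apply]

lemma comp_apply_of_len {n : ℕ} {f : FreeStarAlg g} {w : Wrd g} (hw : wlen w = n) :
    (comp n f).coeff w = f.coeff w := by rw [comp_apply, if_pos hw]

lemma comp_apply_of_ne {n : ℕ} {f : FreeStarAlg g} {w : Wrd g} (hw : wlen w ≠ n) :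
    (comp n f).coeff w = 0 := by rw [comp_apply, if_neg hw]

lemma mem_support_comp {n : ℕ} {f : FreeStarAlg g} {w : Wrd g} :
    w ∈ (comp n f).coeff.support ↔ w ∈ f.coeff.support ∧ wlen w = n := by
  rw [Finsupp.mem_support_iff, comp_apply]
  split <;> rename_i h1 <;> simp [Finsupp.mem_support_iff, h1]

lemma comp_add (n : ℕ) (f h : FreeStarAlg g) : comp n (f + h) = comp n f + comp n h := by
  ext w
  rw [MonoidAlgebra.coeff_add, Finsupp.add_apply, comp_apply, comp_apply, comp_apply,
    MonoidAlgebra.coeff_add, Finsupp.add_apply]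
  split <;> simp

lemma comp_sum {ι : Type*} (n : ℕ) (s : Finset ι) (f : ι → FreeStarAlg g) :
    comp n (∑ i ∈ s, f i) = ∑ i ∈ s, comp n (f i) := by
  classical
  induction s using Finset.induction with
  | empty => ext w; rw [comp_apply]; split <;> simp
  | insert _ _ h ih => rw [Finset.sum_insert h, Finset.sum_insert h, comp_add, ih]

lemma deg_comp_le (n : ℕ) (f : FreeStarAlg g) : deg (comp n f) ≤ n := by
  rw [deg_le_iff]
  intro w hw
  exact (mem_support_comp.mp hw).2.le

lemma comp_eq_zero_of_deg_lt {n : ℕ} {f : FreeStarAlg g} (h : deg f < n) : comp n f = 0 := by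
  ext w
  rw [comp_apply]
  split <;> rename_i h1
  · rw [Finsupp.notMem_support_iff.mp]
    · rfl
    · intro hw
      exact absurd (wlen_le_deg hw) (by omega)
  · rfl

lemma comp_deg_ne_zero {f : FreeStarAlg g} (hf : f ≠ 0) : comp (deg f) f ≠ 0 := by
  obtain ⟨w, hw, hl⟩ := exists_wlen_eq_deg hf
  intro h
  have := comp_apply_of_len (f := f) hl
  rw [h] at this
  exact Finsupp.mem_support_iff.mp hw this.symm

lemma comp_starP (n : ℕ) (f : FreeStarAlg g) : comp n (starP f) = starP (comp n f) := by
  ext w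
  rw [comp_apply, starP_apply, starP_apply, comp_apply, wlen_starWord]

lemma isHom_comp (n : ℕ) (f : FreeStarAlg g) : ∀ w ∈ (comp n f).coeff.support, wlen w = n :=
  fun _ hw => (mem_support_comp.mp hw).2

lemma comp_mul {f h : FreeStarAlg g} {a b : ℕ} (hf : deg f ≤ a) (hh : deg h ≤ b) :
    comp (a + b) (f * h) = comp a f * comp b h := by
  classical
  ext m
  by_cases hm : wlen m = a + b
  · rw [comp_apply_of_len hm, mul_apply_split hf hh hm,
      mul_apply_split (deg_comp_le a f) (deg_comp_le b h) hm,
      comp_apply_of_len, comp_apply_of_len]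
    · rw [wlen_wdrop, hm]; omega
    · rw [wlen_wtake, hm]; exact min_eq_left (by omega)
  · rw [comp_apply_of_ne hm]
    by_contra hne
    have hmem : m ∈ (comp a f * comp b h).coeff.support := by
      rw [Finsupp.mem_support_iff]
      exact fun hz => hne hz.symm
    have := MonoidAlgebra.support_coeff_mul_subset (comp a f) (comp b h) hmem
    rw [Finset.mem_mul] at this
    obtain ⟨u, hu, v, hv, huv⟩ := this
    apply hm
    rw [← huv, wlen_mul, (mem_support_comp.mp hu).2, (mem_support_comp.mp hv).2]


/- ### first-letter derivative and homogeneous division -/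

lemma toList_of_mul (ℓ : Fin g ⊕ Fin g) (w : Wrd g) :
    FreeMonoid.toList (FreeMonoid.of ℓ * w) = ℓ :: FreeMonoid.toList w := by
  simp [FreeMonoid.toList_mul]

lemma of_mul_injective (ℓ : Fin g ⊕ Fin g) :
    Function.Injective (fun w : Wrd g => FreeMonoid.of ℓ * w) := by
  intro u v h
  apply FreeMonoid.toList.injective
  have := congrArg FreeMonoid.toList h
  simpa [toList_of_mul] using this

def Dl (ℓ : Fin g ⊕ Fin g) (f : FreeStarAlg g) : FreeStarAlg g :=
  MonoidAlgebra.ofCoeff (Finsupp.comapDomain (fun w => FreeMonoid.of ℓ * w) f.coeff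
    (fun u _ v _ h => of_mul_injective ℓ h))

lemma Dl_apply (ℓ : Fin g ⊕ Fin g) (f : FreeStarAlg g) (w : Wrd g) :
    (Dl ℓ f).coeff w = f.coeff (FreeMonoid.of ℓ * w) := rfl

lemma Dl_zero (ℓ : Fin g ⊕ Fin g) : Dl ℓ (0 : FreeStarAlg g) = 0 := by
  ext w; rw [Dl_apply]; rfl

lemma Dl_add (ℓ : Fin g ⊕ Fin g) (f h : FreeStarAlg g) :
    Dl ℓ (f + h) = Dl ℓ f + Dl ℓ h := by
  ext w; rw [MonoidAlgebra.coeff_add, Finsupp.add_apply, Dl_apply, Dl_apply, Dl_apply,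
    MonoidAlgebra.coeff_add, Finsupp.add_apply]

lemma Dl_sum {ι : Type*} (ℓ : Fin g ⊕ Fin g) (s : Finset ι) (f : ι → FreeStarAlg g) :
    Dl ℓ (∑ i ∈ s, f i) = ∑ i ∈ s, Dl ℓ (f i) := by
  classical
  induction s using Finset.induction with
  | empty => simpa using Dl_zero ℓ
  | insert _ _ h ih => rw [Finset.sum_insert h, Finset.sum_insert h, Dl_add, ih]

lemma hom_Dl {n : ℕ} {f : FreeStarAlg g} (hf : ∀ w ∈ f.coeff.support, wlen w = n)
    (ℓ : Fin g ⊕ Fin g) : ∀ w ∈ (Dl ℓ f).coeff.support, wlen w = n - 1 := by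
  intro w hw
  rw [Finsupp.mem_support_iff, Dl_apply] at hw
  have := hf _ (Finsupp.mem_support_iff.mpr hw)
  rw [wlen, toList_of_mul] at this
  simp only [List.length_cons] at this
  show (FreeMonoid.toList w).length = n - 1
  omega

lemma single_of_mul_apply_cons (ℓ : Fin g ⊕ Fin g) (c : ℝ) (f : FreeStarAlg g) (w : Wrd g) :
    (MonoidAlgebra.single (FreeMonoid.of ℓ) c * f).coeff (FreeMonoid.of ℓ * w) = c * f.coeff w := by
  apply MonoidAlgebra.coeff_single_mul_eq_mul_coeff
  intro a _
  constructor
  · exact fun h => of_mul_injective ℓ h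
  · intro h; rw [h]

lemma single_of_mul_apply_ne (ℓ : Fin g ⊕ Fin g) (c : ℝ) (f : FreeStarAlg g) {m : Wrd g}
    (hm : ∀ w, m ≠ FreeMonoid.of ℓ * w) :
    (MonoidAlgebra.single (FreeMonoid.of ℓ) c * f).coeff m = 0 := by
  exact MonoidAlgebra.coeff_single_mul_of_forall_mul_ne _ _ (fun d h => hm d h.symm)

lemma Dl_single_mul (ℓ ℓ' : Fin g ⊕ Fin g) (c : ℝ) (y : FreeStarAlg g) :
    Dl ℓ' (MonoidAlgebra.single (FreeMonoid.of ℓ) c * y) = if ℓ = ℓ' then c • y else 0 := by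
  ext w
  rw [Dl_apply]
  split <;> rename_i hll
  · subst hll
    rw [single_of_mul_apply_cons, MonoidAlgebra.coeff_smul, Finsupp.smul_apply, smul_eq_mul]
  · rw [single_of_mul_apply_ne]
    · rfl
    · intro w' he
      have := congrArg FreeMonoid.toList he
      rw [toList_of_mul, toList_of_mul] at this
      exact hll (by injection this with h1 _; exact h1.symm)

lemma decomp_first (f : FreeStarAlg g) {n : ℕ} (hf : ∀ w ∈ f.coeff.support, wlen w = n)
    (hn : 1 ≤ n) :
    f = ∑ ℓ : Fin g ⊕ Fin g, MonoidAlgebra.single (FreeMonoid.of ℓ) (1:ℝ) * Dl ℓ f := by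
  ext w
  rw [MonoidAlgebra.coeff_sum, Finset.sum_apply']
  cases h : FreeMonoid.toList w with
  | nil =>
    have hw : w = 1 := FreeMonoid.toList.injective (by simpa using h)
    subst hw
    have h0 : f.coeff 1 = 0 := by
      by_contra hne
      have := hf 1 (Finsupp.mem_support_iff.mpr hne)
      simp [wlen] at this
      omega
    rw [h0]
    symm
    apply Finset.sum_eq_zero
    intro ℓ _
    apply single_of_mul_apply_ne
    intro w' he
    have := congrArg wlen he
    rw [wlen_mul] at this
    simp [wlen, FreeMonoid.toList_of] at this
    omega
  | cons ℓ' t =>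
    have hw : w = FreeMonoid.of ℓ' * FreeMonoid.ofList t := by
      apply FreeMonoid.toList.injective
      rw [toList_of_mul, h]
      simp
    subst hw
    rw [Finset.sum_eq_single ℓ']
    · rw [single_of_mul_apply_cons, Dl_apply, one_mul]
    · intro ℓ _ hne
      apply single_of_mul_apply_ne
      intro w' he
      have := congrArg FreeMonoid.toList he
      rw [toList_of_mul, toList_of_mul] at this
      exact hne (by injection this with h1 _; exact h1.symm)
    · intro hmem
      simp at hmem
    
lemma Dl_mul {n : ℕ} {f : FreeStarAlg g} (hf : ∀ w ∈ f.coeff.support, wlen w = n) (hn : 1 ≤ n)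
    (ℓ : Fin g ⊕ Fin g) (x : FreeStarAlg g) : Dl ℓ (f * x) = Dl ℓ f * x := by
  conv_lhs => rw [decomp_first f hf hn]
  rw [Finset.sum_mul]
  rw [Dl_sum]
  have : ∀ ℓ' : Fin g ⊕ Fin g,
      Dl ℓ (MonoidAlgebra.single (FreeMonoid.of ℓ') (1:ℝ) * Dl ℓ' f * x)
        = if ℓ' = ℓ then Dl ℓ' f * x else 0 := by
    intro ℓ'
    rw [mul_assoc, Dl_single_mul]
    split <;> simp
  rw [Finset.sum_congr rfl (fun ℓ' _ => this ℓ')]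
  simp

lemma eq_zero_of_hom_zero {f : FreeStarAlg g} {n : ℕ} (hf : ∀ w ∈ f.coeff.support, wlen w = n)
    (hn : 1 ≤ n) (hD : ∀ ℓ, Dl ℓ f = 0) : f = 0 := by
  rw [decomp_first f hf hn]
  apply Finset.sum_eq_zero
  intro ℓ _
  rw [hD, mul_zero]

lemma hom_zero_single {C : FreeStarAlg g} (hC : ∀ w ∈ C.coeff.support, wlen w = 0) :
    C = MonoidAlgebra.single 1 (C.coeff 1) := by
  ext w
  by_cases hw : w = (1 : Wrd g)
  · subst hw; rw [MonoidAlgebra.coeff_single, Finsupp.single_eq_same]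
  · rw [MonoidAlgebra.coeff_single, Finsupp.single_eq_of_ne' (Ne.symm hw)]
    by_contra hne
    have := hC w (Finsupp.mem_support_iff.mpr hne)
    rw [wlen] at this
    exact hw (FreeMonoid.toList.injective (by simpa using List.length_eq_zero_iff.mp this))

lemma homog_div : ∀ (dC : ℕ) {da : ℕ} (a C B b : FreeStarAlg g),
    (∀ w ∈ a.coeff.support, wlen w = da) → (∀ w ∈ C.coeff.support, wlen w = dC) →
    C ≠ 0 → B ≠ 0 → dC ≤ da → a * B = C * b → ∃ h, a = C * h := by
  intro dC
  induction dC with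
  | zero =>
    intro da a C B b _ hC hCne hBne _ heq
    have hCs := hom_zero_single hC
    have hc1 : C.coeff 1 ≠ 0 := by
      intro h0
      apply hCne
      rw [hCs, h0]
      simp
    refine ⟨(C.coeff 1)⁻¹ • a, ?_⟩
    rw [hCs]
    ext w
    rw [MonoidAlgebra.coeff_single_one_mul, MonoidAlgebra.coeff_smul, Finsupp.smul_apply,
      smul_eq_mul]
    simp only [MonoidAlgebra.coeff_single, Finsupp.single_eq_same]
    field_simp
  | succ n ih =>
    intro da a C B b ha hC hCne hBne hle heq
    by_cases hb : b = 0
    · subst hb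
      rw [mul_zero] at heq
      have haz : a = 0 := by
        by_contra hne
        exact mul_ne_zero_alg hne hBne heq
      exact ⟨0, by rw [haz, mul_zero]⟩
    have hda : 1 ≤ da := le_trans (Nat.succ_le_succ (Nat.zero_le n)) hle
    have hstep : ∀ ℓ, Dl ℓ a * B = Dl ℓ C * b := by
      intro ℓ
      rw [← Dl_mul ha hda ℓ B, ← Dl_mul hC (Nat.succ_le_succ (Nat.zero_le n)) ℓ b, heq]
    have hex : ∃ ℓ, Dl ℓ C ≠ 0 := by
      by_contra hno
      push_neg at hno
      exact hCne (eq_zero_of_hom_zero hC (Nat.succ_le_succ (Nat.zero_le n)) hno)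
    obtain ⟨ℓ₀, hℓ₀⟩ := hex
    obtain ⟨h, hh⟩ := ih (Dl ℓ₀ a) (Dl ℓ₀ C) B b (hom_Dl ha ℓ₀) (by
        intro w hw
        have := hom_Dl hC ℓ₀ w hw
        omega) hℓ₀ hBne (by omega) (hstep ℓ₀)
    have hhb : h * B = b := by
      have := hstep ℓ₀
      rw [hh, mul_assoc] at this
      exact mul_left_cancel_alg hℓ₀ this
    have hall : ∀ ℓ, Dl ℓ a = Dl ℓ C * h := by
      intro ℓ
      by_cases hz : Dl ℓ C = 0
      · rw [hz, zero_mul]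
        by_contra hne
        have := hstep ℓ
        rw [hz, zero_mul] at this
        exact mul_ne_zero_alg hne hBne this
      · obtain ⟨h', hh'⟩ := ih (Dl ℓ a) (Dl ℓ C) B b (hom_Dl ha ℓ) (by
            intro w hw
            have := hom_Dl hC ℓ w hw
            omega) hz hBne (by omega) (hstep ℓ)
        have hh'b : h' * B = b := by
          have := hstep ℓ
          rw [hh', mul_assoc] at this
          exact mul_left_cancel_alg hz this
        have : h' = h := mul_right_cancel_alg hBne (by rw [hhb, hh'b])
        rw [hh', this]
    refine ⟨h, ?_⟩
    rw [decomp_first a ha hda, decomp_first C hC (Nat.succ_le_succ (Nat.zero_le n)),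
      Finset.sum_mul]
    apply Finset.sum_congr rfl
    intro ℓ _
    rw [mul_assoc, hall ℓ]


/- ### reduction modulo the left ideal generated by p -/

section Reduce

variable (lam : Wrd g)

def EndsWith (w : Wrd g) : Prop := ∃ u, w = u * lam

open Classical in
def Bad (f : FreeStarAlg g) : Finset (Wrd g) :=
  f.coeff.support.filter (EndsWith lam)

def Reduced (f : FreeStarAlg g) : Prop := ∀ w ∈ f.coeff.support, ¬ EndsWith lam w

open Classical in
def mea (f : FreeStarAlg g) (K : ℕ) : ℕ := ∑ w ∈ Bad lam f, K ^ (wlen w)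

lemma suffix_unique {u v w w' : Wrd g} (h : u * w = v * w') (hl : wlen w = wlen w') :
    w = w' := by
  have h1 := (eq_wtake_of_mul h).2
  have h2 := (eq_wtake_of_mul (rfl : v * w' = v * w')).2
  have hu : wlen u = wlen v := by
    have := congrArg wlen h
    rw [wlen_mul, wlen_mul, hl] at this
    omega
  rw [h1, hu, ← h2]

lemma reduce (p : FreeStarAlg g) (hlam : lam ∈ p.coeff.support) (hlen : wlen lam = deg p) :
    ∀ f : FreeStarAlg g, ∃ c r, f = c * p + r ∧ Reduced lam r := by
  classical
  set K := p.coeff.support.card + 2 with hK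
  have hK2 : 2 ≤ K := by omega
  have hplam : p.coeff lam ≠ 0 := Finsupp.mem_support_iff.mp hlam
  have base : ∀ f : FreeStarAlg g, Bad lam f = ∅ →
      ∃ c r, f = c * p + r ∧ Reduced lam r := by
    intro f hbad
    refine ⟨0, f, by rw [zero_mul, zero_add], ?_⟩
    intro w hw hew
    have : w ∈ Bad lam f := Finset.mem_filter.mpr ⟨hw, hew⟩
    rw [hbad] at this
    exact absurd this (Finset.notMem_empty w)
  have main : ∀ (N : ℕ) (f : FreeStarAlg g), mea lam f K ≤ N →
      ∃ c r, f = c * p + r ∧ Reduced lam r := by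
    intro N
    induction N with
    | zero =>
      intro f hf
      apply base
      by_contra hbad
      obtain ⟨x, hx⟩ := Finset.nonempty_iff_ne_empty.mpr hbad
      have h1 : K ^ (wlen x) ≤ mea lam f K :=
        Finset.single_le_sum (f := fun w => K ^ (wlen w)) (fun i _ => Nat.zero_le _) hx
      have h2 : 1 ≤ K ^ (wlen x) := Nat.one_le_pow _ _ (by omega)
      omega
    | succ N IH =>
      intro f hf
      by_cases hbad : Bad lam f = ∅
      · exact base f hbad
      obtain ⟨x, hx⟩ := Finset.nonempty_iff_ne_empty.mpr hbad
      obtain ⟨hxs, u, hxu⟩ := Finset.mem_filter.mp hx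
      set n := wlen x with hn
      have hnd : n = wlen u + wlen lam := by rw [hn, hxu, wlen_mul]
      set t := f.coeff x / p.coeff lam with ht
      set q := t • (MonoidAlgebra.single u (1:ℝ) * p) with hq
      set f' := f - q with hf'
      have hqx : q.coeff x = f.coeff x := by
        have hsx : (MonoidAlgebra.single u (1:ℝ) * p).coeff x = 1 * p.coeff lam := by
          rw [hxu]
          apply MonoidAlgebra.coeff_single_mul_eq_mul_coeff
          intro a _
          constructor
          · intro h
            apply FreeMonoid.toList.injective
            have := congrArg FreeMonoid.toList h
            rw [FreeMonoid.toList_mul, FreeMonoid.toList_mul] at this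
            exact List.append_cancel_left this
          · intro h; rw [h]
        rw [hq, MonoidAlgebra.coeff_smul, Finsupp.smul_apply, hsx, one_mul, smul_eq_mul, ht,
          div_mul_cancel₀ _ hplam]
      have hf'x : f'.coeff x = 0 := by
        rw [hf', MonoidAlgebra.coeff_sub, Finsupp.sub_apply, hqx, sub_self]
      have hsupp' : f'.coeff.support ⊆ f.coeff.support ∪ (p.coeff.support.image (fun w => u * w)) := by
        intro w hw
        rw [hf', MonoidAlgebra.coeff_sub] at hw
        have h1 := Finsupp.support_sub hw
        rcases Finset.mem_union.mp h1 with h | h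
        · exact Finset.mem_union_left _ h
        · refine Finset.mem_union_right _ ?_
          have h2 : q.coeff.support ⊆ (MonoidAlgebra.single u (1:ℝ) * p).coeff.support := by
            rw [hq, MonoidAlgebra.coeff_smul]; exact Finsupp.support_smul
          have h3 := MonoidAlgebra.support_coeff_mul_subset (MonoidAlgebra.single u (1:ℝ)) p (h2 h)
          rw [Finset.mem_mul] at h3
          obtain ⟨u', hu', v, hv, huv⟩ := h3
          have : u' = u := by
            have := Finsupp.support_single_subset hu'
            simpa using this
          subst this
          exact Finset.mem_image.mpr ⟨v, hv, huv⟩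
      set T := ((p.coeff.support.erase lam).image (fun w => u * w)).filter
        (fun y => wlen y < n) with hT
      have hbadsub : Bad lam f' ⊆ (Bad lam f).erase x ∪ T := by
        intro y hy
        obtain ⟨hys, hye⟩ := Finset.mem_filter.mp hy
        have hyne : y ≠ x := by
          intro h
          exact (Finsupp.mem_support_iff.mp hys) (h ▸ hf'x)
        rcases Finset.mem_union.mp (hsupp' hys) with h | h
        · exact Finset.mem_union_left _
            (Finset.mem_erase.mpr ⟨hyne, Finset.mem_filter.mpr ⟨h, hye⟩⟩)
        · obtain ⟨w, hw, hwy⟩ := Finset.mem_image.mp h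
          have hwne : w ≠ lam := by
            intro h0
            apply hyne
            rw [← hwy, h0, ← hxu]
          have hwl : wlen w < wlen lam := by
            rcases lt_or_ge (wlen w) (wlen lam) with h0 | h0
            · exact h0
            · exfalso
              have hle : wlen w ≤ deg p := wlen_le_deg hw
              have heq : wlen w = wlen lam := by omega
              obtain ⟨v, hv⟩ := hye
              exact hwne (suffix_unique (by rw [hwy, hv]) heq)
          refine Finset.mem_union_right _ (Finset.mem_filter.mpr
            ⟨Finset.mem_image.mpr ⟨w, Finset.mem_erase.mpr ⟨hwne, hw⟩, hwy⟩, ?_⟩)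
          rw [← hwy, wlen_mul]
          omega
      have hTsum : ∑ y ∈ T, K ^ (wlen y) ≤ p.coeff.support.card * K ^ (n - 1) := by
        have h1 : ∀ y ∈ T, K ^ (wlen y) ≤ K ^ (n - 1) := by
          intro y hy
          have := (Finset.mem_filter.mp hy).2
          exact Nat.pow_le_pow_right (by omega) (by omega)
        calc ∑ y ∈ T, K ^ (wlen y) ≤ T.card * K ^ (n - 1) := by
              simpa using Finset.sum_le_card_nsmul T _ _ h1
          _ ≤ p.coeff.support.card * K ^ (n - 1) := by
              apply Nat.mul_le_mul_right
              calc T.card ≤ ((p.coeff.support.erase lam).image (fun w => u * w)).card :=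
                    Finset.card_filter_le _ _
                _ ≤ (p.coeff.support.erase lam).card := Finset.card_image_le
                _ ≤ p.coeff.support.card := (Finset.card_erase_le)
      have hmea : mea lam f' K < mea lam f K := by
        have h1 : mea lam f' K ≤ ∑ y ∈ (Bad lam f).erase x ∪ T, K ^ (wlen y) :=
          Finset.sum_le_sum_of_subset hbadsub
        have h2 : ∑ y ∈ (Bad lam f).erase x ∪ T, K ^ (wlen y) ≤
            (∑ y ∈ (Bad lam f).erase x, K ^ (wlen y)) + ∑ y ∈ T, K ^ (wlen y) := by
          have := Finset.sum_union_inter (s₁ := (Bad lam f).erase x) (s₂ := T)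
            (f := fun y => K ^ (wlen y))
          omega
        have h3 : (∑ y ∈ (Bad lam f).erase x, K ^ (wlen y)) + K ^ n = mea lam f K :=
          Finset.sum_erase_add _ _ hx
        have h5 : (∑ y ∈ T, K ^ (wlen y)) < K ^ n := by
          by_cases hn0 : n = 0
          · have hTe : T = ∅ := by
              apply Finset.eq_empty_of_forall_notMem
              intro y hy
              have := (Finset.mem_filter.mp hy).2
              omega
            rw [hTe, Finset.sum_empty]
            exact Nat.pow_pos (by omega)
          · have hKn : K ^ n = K * K ^ (n - 1) := by
              conv_lhs => rw [show n = 1 + (n - 1) by omega]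
              rw [pow_add, pow_one]
            have h6 : p.coeff.support.card * K ^ (n - 1) < K * K ^ (n - 1) := by
              apply Nat.mul_lt_mul_of_lt_of_le (by omega) (le_refl _)
              exact Nat.pow_pos (by omega)
            omega
        omega
      obtain ⟨c, r, hcr, hred⟩ := IH f' (by omega)
      refine ⟨c + t • MonoidAlgebra.single u 1, r, ?_, hred⟩
      have hfq : f = f' + q := by rw [hf', sub_add_cancel]
      rw [hfq, hcr, add_mul, smul_mul_assoc, hq]
      abel
  intro f
  exact main (mea lam f K) f le_rfl

end Reduce


/- ### misc word splitting helpers -/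

lemma wtake_mul_left {n : ℕ} {u : Wrd g} (h : n ≤ wlen u) (v : Wrd g) :
    wtake n (u * v) = wtake n u := by
  apply FreeMonoid.toList.injective
  simp only [wtake, FreeMonoid.toList_mul, FreeMonoid.toList_ofList,
    List.take_append]
  rw [show n - (FreeMonoid.toList u).length = 0 by
    have : wlen u = (FreeMonoid.toList u).length := rfl; omega]
  simp

lemma wdrop_mul_left {n : ℕ} {u : Wrd g} (h : n ≤ wlen u) (v : Wrd g) :
    wdrop n (u * v) = wdrop n u * v := by
  apply FreeMonoid.toList.injective
  simp only [wdrop, FreeMonoid.toList_mul, FreeMonoid.toList_ofList,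
    List.drop_append]
  rw [show n - (FreeMonoid.toList u).length = 0 by
    have : wlen u = (FreeMonoid.toList u).length := rfl; omega]
  simp

lemma wtake_mul_right {n : ℕ} {u : Wrd g} (h : wlen u ≤ n) (v : Wrd g) :
    wtake n (u * v) = u * wtake (n - wlen u) v := by
  apply FreeMonoid.toList.injective
  simp only [wtake, FreeMonoid.toList_mul, FreeMonoid.toList_ofList,
    List.take_append]
  rw [List.take_of_length_le (by exact h)]
  rfl

lemma wdrop_mul_right {n : ℕ} {u : Wrd g} (h : wlen u ≤ n) (v : Wrd g) :
    wdrop n (u * v) = wdrop (n - wlen u) v := by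
  apply FreeMonoid.toList.injective
  simp only [wdrop, FreeMonoid.toList_mul, FreeMonoid.toList_ofList,
    List.drop_append]
  rw [List.drop_of_length_le (by exact h)]
  rfl

lemma expand_support (f : FreeStarAlg g) :
    f = ∑ w ∈ f.coeff.support, MonoidAlgebra.single w (f.coeff w) := by
  conv_lhs => rw [← MonoidAlgebra.sum_coeff_single f]
  rfl

lemma single_mul_expand (x : Wrd g) (c : ℝ) (f : FreeStarAlg g) :
    MonoidAlgebra.single x c * f = ∑ v ∈ f.coeff.support, MonoidAlgebra.single (x * v) (c * f.coeff v) := by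
  conv_lhs => rw [expand_support f]
  rw [Finset.mul_sum]
  apply Finset.sum_congr rfl
  intro v _
  rw [MonoidAlgebra.single_mul_single]

/- ### SOS coefficient lemma -/

lemma sos_coeff {k : ℕ} (r : Fin k → FreeStarAlg g) {D : ℕ} (hD : ∀ i, deg (r i) ≤ D)
    {w : Wrd g} (hw : wlen w = D) :
    (∑ i, starP (r i) * r i).coeff (starWord w * w) = ∑ i, ((r i).coeff w)^2 := by
  rw [MonoidAlgebra.coeff_sum, Finset.sum_apply']
  apply Finset.sum_congr rfl
  intro i _
  have hsw : wlen (starWord w * w) = D + D := by rw [wlen_mul, wlen_starWord, hw]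
  rw [mul_apply_split (by rw [deg_starP]; exact hD i) (hD i) hsw]
  have h1 := (eq_wtake_of_mul (rfl : starWord w * w = starWord w * w)).1
  have h2 := (eq_wtake_of_mul (rfl : starWord w * w = starWord w * w)).2
  rw [wlen_starWord, hw] at h1 h2
  rw [← h1, ← h2, starP_apply, starWord_starWord, sq]

lemma exists_max_nonzero {k : ℕ} (r : Fin k → FreeStarAlg g) (hne : ∃ i, r i ≠ 0) :
    ∃ j, r j ≠ 0 ∧ ∀ i, deg (r i) ≤ deg (r j) := by
  classical
  obtain ⟨i₀, hi₀⟩ := hne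
  set S := Finset.univ.filter (fun i => r i ≠ 0) with hS
  have hSne : S.Nonempty := ⟨i₀, Finset.mem_filter.mpr ⟨Finset.mem_univ _, hi₀⟩⟩
  obtain ⟨j, hj, hjs⟩ := Finset.exists_max_image S (fun i => deg (r i)) hSne
  refine ⟨j, (Finset.mem_filter.mp hj).2, fun i => ?_⟩
  by_cases hri : r i = 0
  · rw [hri, deg_zero]; exact Nat.zero_le _
  · exact hjs i (Finset.mem_filter.mpr ⟨Finset.mem_univ _, hri⟩)

lemma sos_ne_zero_and_deg {k : ℕ} (r : Fin k → FreeStarAlg g) {j : Fin k}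
    (hj : r j ≠ 0) (hmax : ∀ i, deg (r i) ≤ deg (r j)) :
    (∑ i, starP (r i) * r i) ≠ 0 ∧ 2 * deg (r j) ≤ deg (∑ i, starP (r i) * r i) := by
  obtain ⟨w, hw, hwl⟩ := exists_wlen_eq_deg hj
  have hco := sos_coeff r hmax hwl
  have hpos : (0:ℝ) < ∑ i, ((r i).coeff w)^2 := by
    apply Finset.sum_pos' (fun i _ => sq_nonneg _)
    refine ⟨j, Finset.mem_univ _, ?_⟩
    have := Finsupp.mem_support_iff.mp hw
    positivity
  have hmem : starWord w * w ∈ (∑ i, starP (r i) * r i).coeff.support := by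
    rw [Finsupp.mem_support_iff, hco]
    exact ne_of_gt hpos
  constructor
  · intro h0
    rw [h0] at hmem
    simpa using hmem
  · have := wlen_le_deg hmem
    rw [wlen_mul, wlen_starWord, hwl] at this
    omega

/- ### the dual separation lemma -/

lemma mem_rightMul_of_dual (π b : FreeStarAlg g)
    (h : ∀ φ : Module.Dual ℝ (FreeStarAlg g), (∀ c : FreeStarAlg g, φ (c * π) = 0) → φ b = 0) :
    ∃ c, b = c * π := by
  by_contra hmem
  push_neg at hmem
  set U := LinearMap.range (LinearMap.mulRight ℝ π) with hU
  have hbU : b ∉ U := by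
    intro hb
    obtain ⟨c, hc⟩ := hb
    exact hmem c (by rw [← hc, LinearMap.mulRight_apply])
  obtain ⟨ψ, hψ⟩ : ∃ ψ : Module.Dual ℝ (FreeStarAlg g ⧸ U), ψ (U.mkQ b) ≠ 0 := by
    by_contra hno
    push_neg at hno
    exact hbU ((Submodule.Quotient.mk_eq_zero U).mp
      ((Module.forall_dual_apply_eq_zero_iff ℝ _).mp hno))
  apply hψ
  apply h (ψ.comp U.mkQ)
  intro c
  have hcU : c * π ∈ U := ⟨c, LinearMap.mulRight_apply ℝ π c⟩
  simp only [LinearMap.comp_apply]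
  rw [show U.mkQ (c * π) = 0 from (Submodule.Quotient.mk_eq_zero U).mpr hcU, map_zero]

/- ### the homogeneous lemma -/

lemma homog_lemma {k : ℕ} (b : Fin k → FreeStarAlg g) (π γ : FreeStarAlg g) {D d : ℕ}
    (hd : d ≤ D)
    (hπ : ∀ w ∈ π.coeff.support, wlen w = d)
    (hγ : ∀ w ∈ γ.coeff.support, wlen w = 2*D - d)
    (hb : ∀ i, ∀ w ∈ (b i).coeff.support, wlen w = D)
    (heq : ∑ i, starP (b i) * b i = γ * π + starP π * starP γ) :
    ∀ i, ∃ c, b i = c * π := by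
  classical
  intro i₀
  apply mem_rightMul_of_dual
  intro φ hφ
  set wt : Wrd g → ℝ := fun m =>
    φ (MonoidAlgebra.single (starWord (wtake D m)) 1) *
      φ (MonoidAlgebra.single (wdrop D m) 1) with hwt
  set L : FreeStarAlg g → ℝ := fun f => f.coeff.sum fun m c => c * wt m with hL
  have L_single : ∀ (m : Wrd g) (c : ℝ), L (MonoidAlgebra.single m c) = c * wt m := by
    intro m c
    exact Finsupp.sum_single_index (by ring)
  have L_add : ∀ f h : FreeStarAlg g, L (f + h) = L f + L h := by
    intro f h
    simp only [hL]
    rw [MonoidAlgebra.coeff_add]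
    exact Finsupp.sum_add_index (fun a _ => by ring) (fun a _ b₁ b₂ => by ring)
  have L_zero : L 0 = 0 := Finsupp.sum_zero_index
  have L_sum : ∀ {ι : Type} (s : Finset ι) (f : ι → FreeStarAlg g),
      L (∑ i ∈ s, f i) = ∑ i ∈ s, L (f i) := by
    intro ι s f
    induction s using Finset.induction with
    | empty => simpa using L_zero
    | insert _ _ hmem ih => rw [Finset.sum_insert hmem, Finset.sum_insert hmem, L_add, ih]
  have phi_single_mul : ∀ x : Wrd g,
      (∑ v ∈ π.coeff.support, π.coeff v * φ (MonoidAlgebra.single (x * v) 1)) = 0 := by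
    intro x
    have h1 : φ (MonoidAlgebra.single x (1:ℝ) * π) = 0 := hφ _
    rw [single_mul_expand, map_sum] at h1
    rw [← h1]
    apply Finset.sum_congr rfl
    intro v _
    rw [one_mul, show MonoidAlgebra.single (x*v) (π.coeff v) = (π.coeff v) • MonoidAlgebra.single (x*v) (1:ℝ)
      from by rw [MonoidAlgebra.smul_single', mul_one], map_smul, smul_eq_mul]
  have phi_eval : ∀ f : FreeStarAlg g,
      φ f = ∑ w ∈ f.coeff.support, f.coeff w * φ (MonoidAlgebra.single w 1) := by
    intro f
    conv_lhs => rw [expand_support f]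
    rw [map_sum]
    apply Finset.sum_congr rfl
    intro w _
    rw [show MonoidAlgebra.single w (f.coeff w) = (f.coeff w) • MonoidAlgebra.single w (1:ℝ)
      from by rw [MonoidAlgebra.smul_single', mul_one], map_smul, smul_eq_mul]
  -- claim 1
  have claim1 : ∀ i, L (starP (b i) * b i) = (φ (b i))^2 := by
    intro i
    have h1 : starP (b i) * b i = ∑ u ∈ (b i).coeff.support, ∑ v ∈ (b i).coeff.support,
        MonoidAlgebra.single (starWord u * v) ((b i).coeff u * (b i).coeff v) := by
      conv_lhs => rw [expand_support (b i)]
      rw [starP_sum, Finset.sum_mul]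
      apply Finset.sum_congr rfl
      intro u _
      rw [starP_single, Finset.mul_sum]
      apply Finset.sum_congr rfl
      intro v _
      rw [MonoidAlgebra.single_mul_single]
    have hwt' : ∀ u ∈ (b i).coeff.support, ∀ v ∈ (b i).coeff.support,
        wt (starWord u * v) =
          φ (MonoidAlgebra.single u 1) * φ (MonoidAlgebra.single v 1) := by
      intro u hu v hv
      have h2 := (eq_wtake_of_mul (rfl : starWord u * v = starWord u * v)).1
      have h3 := (eq_wtake_of_mul (rfl : starWord u * v = starWord u * v)).2
      rw [wlen_starWord, hb i u hu] at h2 h3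
      rw [hwt]
      dsimp only
      rw [← h2, ← h3, starWord_starWord]
    rw [h1, L_sum]
    rw [Finset.sum_congr rfl (fun u hu => L_sum _ _)]
    rw [Finset.sum_congr rfl (fun u hu => Finset.sum_congr rfl (fun v hv => by
      rw [L_single, hwt' u hu v hv]))]
    rw [phi_eval (b i), sq, Finset.sum_mul_sum]
    apply Finset.sum_congr rfl
    intro u _
    apply Finset.sum_congr rfl
    intro v _
    ring
  -- claim 2a
  have claim2a : L (γ * π) = 0 := by
    have h1 : γ * π = ∑ a ∈ γ.coeff.support, ∑ v ∈ π.coeff.support,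
        MonoidAlgebra.single (a * v) (γ.coeff a * π.coeff v) := by
      conv_lhs => rw [expand_support γ]
      rw [Finset.sum_mul]
      apply Finset.sum_congr rfl
      intro a _
      rw [single_mul_expand]
    rw [h1, L_sum]
    apply Finset.sum_eq_zero
    intro a ha
    rw [L_sum]
    have hal : D ≤ wlen a := by
      rw [hγ a ha]; omega
    have hterm : ∀ v ∈ π.coeff.support, L (MonoidAlgebra.single (a * v) (γ.coeff a * π.coeff v)) =
        (γ.coeff a * φ (MonoidAlgebra.single (starWord (wtake D a)) 1)) *
          (π.coeff v * φ (MonoidAlgebra.single (wdrop D a * v) 1)) := by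
      intro v hv
      rw [L_single, hwt]
      dsimp only
      rw [wtake_mul_left hal, wdrop_mul_left hal]
      ring
    rw [Finset.sum_congr rfl hterm, ← Finset.mul_sum]
    rw [phi_single_mul (wdrop D a), mul_zero]
  -- claim 2b
  have claim2b : L (starP π * starP γ) = 0 := by
    have h1 : starP π * starP γ = ∑ v ∈ π.coeff.support, ∑ a ∈ γ.coeff.support,
        MonoidAlgebra.single (starWord v * starWord a) (π.coeff v * γ.coeff a) := by
      conv_lhs => rw [expand_support π, expand_support γ]
      rw [starP_sum, starP_sum, Finset.sum_mul]
      apply Finset.sum_congr rfl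
      intro v _
      rw [starP_single, Finset.mul_sum]
      apply Finset.sum_congr rfl
      intro a _
      rw [starP_single, MonoidAlgebra.single_mul_single]
    rw [h1, L_sum]
    rw [Finset.sum_congr rfl (fun v hv => L_sum _ _)]
    rw [Finset.sum_comm]
    apply Finset.sum_eq_zero
    intro a ha
    have hvl : ∀ v ∈ π.coeff.support, wlen (starWord v) ≤ D := by
      intro v hv
      rw [wlen_starWord, hπ v hv]
      exact hd
    have hterm : ∀ v ∈ π.coeff.support, L (MonoidAlgebra.single (starWord v * starWord a) (π.coeff v * γ.coeff a)) =
        (γ.coeff a * φ (MonoidAlgebra.single (wdrop (D - d) (starWord a)) 1)) *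
          (π.coeff v * φ (MonoidAlgebra.single
            (starWord (wtake (D - d) (starWord a)) * v) 1)) := by
      intro v hv
      rw [L_single, hwt]
      dsimp only
      rw [wtake_mul_right (by rw [wlen_starWord, hπ v hv]; exact hd),
        wdrop_mul_right (by rw [wlen_starWord, hπ v hv]; exact hd)]
      rw [wlen_starWord, hπ v hv, starWord_mul, starWord_starWord]
      ring
    rw [Finset.sum_congr rfl hterm, ← Finset.mul_sum]
    rw [phi_single_mul (starWord (wtake (D - d) (starWord a))), mul_zero]
  -- combine
  have hfin : ∑ i, (φ (b i))^2 = 0 := by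
    have h1 : L (∑ i, starP (b i) * b i) = ∑ i, (φ (b i))^2 := by
      rw [L_sum]
      exact Finset.sum_congr rfl (fun i _ => claim1 i)
    rw [← h1, heq, L_add, claim2a, claim2b, add_zero]
  have := (Finset.sum_eq_zero_iff_of_nonneg (fun i _ => sq_nonneg (φ (b i)))).mp hfin
    i₀ (Finset.mem_univ _)
  exact pow_eq_zero_iff (by norm_num) |>.mp this


lemma comp_sub (n : ℕ) (f h : FreeStarAlg g) : comp n (f - h) = comp n f - comp n h := by
  ext w
  rw [MonoidAlgebra.coeff_sub, Finsupp.sub_apply, comp_apply, comp_apply, comp_apply,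
    MonoidAlgebra.coeff_sub, Finsupp.sub_apply]
  split <;> simp

lemma deg_sum_le {ι : Type*} (s : Finset ι) (f : ι → FreeStarAlg g) (n : ℕ)
    (h : ∀ i ∈ s, deg (f i) ≤ n) : deg (∑ i ∈ s, f i) ≤ n := by
  classical
  induction s using Finset.induction with
  | empty => simp
  | insert a s hmem ih =>
    rw [Finset.sum_insert hmem]
    refine le_trans (deg_add_le _ _) (max_le (h a (Finset.mem_insert_self a s)) ?_)
    exact ih (fun i hi => h i (Finset.mem_insert_of_mem hi))

lemma comp_eq_self {n : ℕ} {f : FreeStarAlg g} (h : ∀ w ∈ f.coeff.support, wlen w = n) :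
    comp n f = f := by
  ext w
  rw [comp_apply]
  split <;> rename_i h1
  · rfl
  · by_contra hne
    exact h1 (h w (Finsupp.mem_support_iff.mpr (fun h0 => hne h0.symm)))

lemma starP_ne_zero {f : FreeStarAlg g} (h : f ≠ 0) : starP f ≠ 0 := by
  intro h0
  exact h (starP_injective (by rw [h0, starP_zero]))

end FreeStarAlg

open FreeStarAlg

/-- The left ideal generated by a single polynomial `p` is real iff
there is no `q` with `deg q < deg p` such that `q p + p* q*` is a nonzero sum of
squares. -/
theorem stmt7 {g : ℕ} (p : FreeStarAlg g) :
    IsRealIdeal (leftIdealGen {p}) ↔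
      ¬ ∃ q : FreeStarAlg g, deg q < deg p ∧
        IsSOS (q * p + starP p * starP q) ∧ q * p + starP p * starP q ≠ 0 := by
  classical
  have hmem : ∀ f : FreeStarAlg g, f ∈ leftIdealGen {p} ↔ ∃ c, f = c * p := by
    intro f
    rw [leftIdealGen, Submodule.mem_span_singleton]
    constructor
    · rintro ⟨c, hc⟩
      exact ⟨c, by rw [← hc, smul_eq_mul]⟩
    · rintro ⟨c, hc⟩
      exact ⟨c, by rw [smul_eq_mul, hc]⟩
  constructor
  · -- forward direction
    intro hreal
    rintro ⟨q, hq, ⟨k, a, hsos⟩, hne⟩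
    have hs_mem : MemIplusIstar (leftIdealGen {p}) (q * p + starP p * starP q) := by
      refine ⟨q * p, (hmem _).mpr ⟨q, rfl⟩, q * p, (hmem _).mpr ⟨q, rfl⟩, ?_⟩
      rw [starP_mul]
    rw [hsos] at hs_mem hne
    have hall := hreal k a hs_mem
    have hane : ∃ i, a i ≠ 0 := by
      by_contra hno
      push_neg at hno
      apply hne
      apply Finset.sum_eq_zero
      intro i _
      rw [hno i, mul_zero]
    obtain ⟨j, hj, hjm⟩ := exists_max_nonzero a hane
    obtain ⟨-, hσdeg⟩ := sos_ne_zero_and_deg a hj hjm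
    obtain ⟨c, hc⟩ := (hmem (a j)).mp (hall j)
    have hcne : c ≠ 0 := by rintro rfl; exact hj (by rw [hc, zero_mul])
    have hpne : p ≠ 0 := by rintro rfl; exact hj (by rw [hc, mul_zero])
    have hdegaj : deg (a j) = deg c + deg p := by rw [hc]; exact deg_mul hcne hpne
    have hup : deg (∑ i, starP (a i) * a i) ≤ deg q + deg p := by
      rw [← hsos]
      refine le_trans (deg_add_le _ _) (max_le (deg_mul_le q p) ?_)
      calc deg (starP p * starP q) ≤ deg (starP p) + deg (starP q) := deg_mul_le _ _
        _ = deg p + deg q := by rw [deg_starP, deg_starP]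
        _ = deg q + deg p := by omega
    omega
  · -- backward direction
    intro hno
    have H : ∀ q : FreeStarAlg g, deg q < deg p →
        IsSOS (q * p + starP p * starP q) → q * p + starP p * starP q = 0 := by
      intro q h1 h2
      by_contra h3
      exact hno ⟨q, h1, h2, h3⟩
    intro k a hIa
    obtain ⟨u, hu, v, hv, heq⟩ := hIa
    obtain ⟨cu, hcu⟩ := (hmem u).mp hu
    obtain ⟨cv, hcv⟩ := (hmem v).mp hv
    rw [hcu, hcv] at heq
    by_cases hp0 : p = 0
    · subst hp0
      rw [mul_zero, mul_zero, starP_zero, add_zero] at heq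
      have hz : ∀ i, a i = 0 := by
        by_contra hnz
        push_neg at hnz
        obtain ⟨j, hj, hjm⟩ := exists_max_nonzero a hnz
        exact (sos_ne_zero_and_deg a hj hjm).1 heq
      intro i
      rw [hz i]
      exact Submodule.zero_mem _
    by_cases hd0 : deg p = 0
    · have hp_eq : p = MonoidAlgebra.single 1 (p.coeff 1) :=
        hom_zero_single (fun w hw => by have := wlen_le_deg hw; omega)
      have hp1 : p.coeff 1 ≠ 0 := by
        intro h0
        apply hp0
        rw [hp_eq, h0]
        simp
      intro i
      apply (hmem _).mpr
      refine ⟨(p.coeff 1)⁻¹ • a i, ?_⟩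
      ext w
      conv_rhs => rw [hp_eq]
      rw [MonoidAlgebra.coeff_mul_single_one, MonoidAlgebra.coeff_smul, Finsupp.smul_apply,
        smul_eq_mul]
      simp only [MonoidAlgebra.coeff_single, Finsupp.single_eq_same]
      field_simp
    -- main case
    have hd1 : 1 ≤ deg p := by omega
    obtain ⟨lam, hlam, hlen⟩ := exists_wlen_eq_deg hp0
    choose c r hcr hrred using fun i => reduce lam p hlam hlen (a i)
    set σ := ∑ i, starP (r i) * r i with hσdef
    suffices hriz : ∀ i, r i = 0 by
      intro i
      apply (hmem _).mpr
      exact ⟨c i, by rw [hcr i, hriz i, add_zero]⟩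
    by_contra hnz
    push_neg at hnz
    obtain ⟨j, hj, hjm⟩ := exists_max_nonzero r hnz
    obtain ⟨hσne, hσge⟩ := sos_ne_zero_and_deg r hj hjm
    rw [← hσdef] at hσne hσge
    have hsum1 : ∑ i, starP (a i) * a i
        = (∑ i, starP (c i * p) * (c i * p)) + ((∑ i, starP (c i * p) * r i)
          + ((∑ i, starP (r i) * (c i * p)) + σ)) := by
      rw [hσdef, ← Finset.sum_add_distrib, ← Finset.sum_add_distrib, ← Finset.sum_add_distrib]
      apply Finset.sum_congr rfl
      intro i _
      rw [hcr i, starP_add]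
      noncomm_ring
    have hσ_eq : σ = cu * p + starP (cv * p)
        - (∑ i, starP (c i * p) * (c i * p)) - (∑ i, starP (c i * p) * r i)
        - (∑ i, starP (r i) * (c i * p)) := by
      rw [eq_sub_iff_add_eq, eq_sub_iff_add_eq, eq_sub_iff_add_eq, ← heq, hsum1]
      abel
    have hS3 : ∑ i, starP (r i) * (c i * p) = (∑ i, starP (r i) * c i) * p := by
      rw [Finset.sum_mul]
      exact Finset.sum_congr rfl (fun i _ => (mul_assoc _ _ _).symm)
    have hS2 : ∑ i, starP (c i * p) * r i = starP ((∑ i, starP (r i) * c i) * p) := by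
      rw [← hS3, starP_sum]
      exact Finset.sum_congr rfl
        (fun i _ => by rw [starP_mul (starP (r i)) (c i * p), starP_starP])
    have hS1 : ∑ i, starP (c i * p) * (c i * p)
        = (∑ i, starP p * starP (c i) * c i) * p := by
      rw [Finset.sum_mul]
      refine Finset.sum_congr rfl (fun i _ => ?_)
      rw [starP_mul]
      noncomm_ring
    set A := ∑ i, starP (r i) * c i with hA
    set B := ∑ i, starP p * starP (c i) * c i with hB
    have hFG : σ = (cu - B - A) * p + starP ((cv - A) * p) := by
      rw [hσ_eq, hS1, hS2, hS3, sub_mul, sub_mul, sub_mul, starP_sub]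
      abel
    have hσstar : starP σ = σ := by
      rw [hσdef, starP_sum]
      exact Finset.sum_congr rfl (fun i _ => by rw [starP_mul, starP_starP])
    have hGF : σ = (cv - A) * p + starP ((cu - B - A) * p) := by
      conv_lhs => rw [← hσstar]
      rw [hFG, starP_add, starP_starP, add_comm]
    have hPex : ∃ n, ∃ Q : FreeStarAlg g, (σ = Q * p + starP (Q * p)) ∧ deg Q = n := by
      refine ⟨_, (1/2 : ℝ) • ((cu - B - A) + (cv - A)), ?_, rfl⟩
      rw [smul_mul_assoc, starP_smul, ← smul_add]
      have h2 : ((cu - B - A) + (cv - A)) * p + starP (((cu - B - A) + (cv - A)) * p)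
          = σ + σ := by
        calc ((cu - B - A) + (cv - A)) * p + starP (((cu - B - A) + (cv - A)) * p)
            = ((cu - B - A) * p + starP ((cv - A) * p))
              + ((cv - A) * p + starP ((cu - B - A) * p)) := by
              rw [add_mul, starP_add]; abel
          _ = σ + σ := by rw [← hFG, ← hGF]
      rw [h2, ← two_smul ℝ σ, smul_smul]
      norm_num
    set e := Nat.find hPex with he
    obtain ⟨Q, hQP, hQd⟩ := Nat.find_spec hPex
    have hmin : ∀ Q' : FreeStarAlg g, σ = Q' * p + starP (Q' * p) → e ≤ deg Q' :=
      fun Q' hP' => Nat.find_min' hPex ⟨Q', hP', rfl⟩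
    have hQP' : σ = Q * p + starP p * starP Q := by rw [hQP, starP_mul]
    have hQne : Q ≠ 0 := by
      rintro rfl
      apply hσne
      rw [hQP, zero_mul, starP_zero, add_zero]
    have hde : deg p ≤ deg Q := by
      by_contra hlt
      push_neg at hlt
      exact hσne (hQP'.trans (H Q hlt ⟨k, r, hQP'.symm.trans hσdef⟩))
    have hup : deg σ ≤ deg Q + deg p := by
      rw [hQP]
      refine le_trans (deg_add_le _ _) (max_le (deg_mul_le _ _) ?_)
      rw [deg_starP]
      exact deg_mul_le _ _
    set D := deg (r j) with hD
    have hσle : deg σ ≤ 2 * D := by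
      rw [hσdef]
      apply deg_sum_le
      intro i _
      calc deg (starP (r i) * r i) ≤ deg (starP (r i)) + deg (r i) := deg_mul_le _ _
        _ = deg (r i) + deg (r i) := by rw [deg_starP]
        _ ≤ 2 * D := by have := hjm i; omega
    have hσeq : deg σ = 2 * D := le_antisymm hσle hσge
    set π := comp (deg p) p with hπdef
    have hπne : π ≠ 0 := comp_deg_ne_zero hp0
    have hπhom : ∀ w ∈ π.coeff.support, wlen w = deg p := isHom_comp _ _
    have hπdeg : deg π = deg p := by
      refine le_antisymm (deg_comp_le _ _) ?_
      have h1 : lam ∈ π.coeff.support := mem_support_comp.mpr ⟨hlam, hlen⟩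
      have := wlen_le_deg h1
      omega
    set γ := comp (deg Q) Q with hγdef
    have hγne : γ ≠ 0 := comp_deg_ne_zero hQne
    have hγhom : ∀ w ∈ γ.coeff.support, wlen w = deg Q := isHom_comp _ _
    by_cases hcase : deg Q + deg p = 2 * D
    · -- homogeneous analysis via the dual-functional lemma
      have hdD : deg p ≤ D := by omega
      have hcompσ : comp (2*D) σ = ∑ i, starP (comp D (r i)) * comp D (r i) := by
        rw [hσdef, comp_sum]
        apply Finset.sum_congr rfl
        intro i _
        rw [show 2*D = D + D by omega,
          comp_mul (by rw [deg_starP]; exact hjm i) (hjm i), comp_starP]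
      have hcompQ : comp (2*D) σ = γ * π + starP π * starP γ := by
        conv_lhs => rw [hQP]
        rw [comp_add]
        congr 1
        · rw [← hcase, comp_mul le_rfl le_rfl, ← hγdef, ← hπdef]
        · rw [starP_mul, show 2*D = deg p + deg Q by omega,
            comp_mul (le_of_eq (deg_starP p)) (le_of_eq (deg_starP Q)),
            comp_starP, comp_starP, ← hγdef, ← hπdef]
      have heqτ : ∑ i, starP (comp D (r i)) * comp D (r i)
          = γ * π + starP π * starP γ := by rw [← hcompσ, hcompQ]
      obtain ⟨c', hc'⟩ := homog_lemma (fun i => comp D (r i)) π γ hdD hπhom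
        (fun w hw => by have := hγhom w hw; omega)
        (fun i => isHom_comp D (r i)) heqτ j
      have hbj : comp D (r j) ≠ 0 := by
        rw [hD]
        exact comp_deg_ne_zero hj
      have hc'ne : c' ≠ 0 := by
        rintro rfl
        rw [zero_mul] at hc'
        exact hbj hc'
      obtain ⟨wc, hwc, hwcl⟩ := exists_wlen_eq_deg hc'ne
      have hcoeff : (c' * π).coeff (wc * lam) = c'.coeff wc * π.coeff lam :=
        mul_apply_maxlen hwcl (by rw [hπdeg]; exact hlen)
      have hπlam : π.coeff lam ≠ 0 := by
        rw [hπdef, comp_apply_of_len hlen]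
        exact Finsupp.mem_support_iff.mp hlam
      have hmem2 : wc * lam ∈ (r j).coeff.support := by
        have h1 : wc * lam ∈ (c' * π).coeff.support := by
          rw [Finsupp.mem_support_iff, hcoeff]
          exact mul_ne_zero (Finsupp.mem_support_iff.mp hwc) hπlam
        rw [← hc'] at h1
        exact (mem_support_comp.mp h1).1
      exact (hrred j) (wc * lam) hmem2 ⟨wc, rfl⟩
    · -- top cancellation: contradict minimality of deg Q
      have hγdeg : deg γ = deg Q := by
        refine le_antisymm (deg_comp_le _ _) ?_
        obtain ⟨w, hw, hwl⟩ := exists_wlen_eq_deg hγne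
        have h1 := hγhom w hw
        have h2 := wlen_le_deg hw
        omega
      have hc0 : γ * π + starP π * starP γ = 0 := by
        have h1 : comp (deg Q + deg p) σ = 0 := comp_eq_zero_of_deg_lt (by omega)
        rw [hQP, comp_add, comp_mul le_rfl le_rfl, starP_mul,
          show deg Q + deg p = deg p + deg Q by omega,
          comp_mul (le_of_eq (deg_starP p)) (le_of_eq (deg_starP Q)),
          comp_starP, comp_starP, ← hγdef, ← hπdef] at h1
        exact h1
      have hπstarhom : ∀ w ∈ (starP π).coeff.support, wlen w = deg p := by
        intro w hw
        rw [mem_support_starP] at hw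
        have := hπhom _ hw
        rwa [wlen_starWord] at this
      have heq' : γ * π = starP π * (- starP γ) := by
        rw [mul_neg]
        exact eq_neg_of_add_eq_zero_left hc0
      obtain ⟨h0, hh0⟩ := homog_div (deg p) γ (starP π) π (- starP γ)
        hγhom hπstarhom (starP_ne_zero hπne) hπne hde heq'
      have hh0ne : h0 ≠ 0 := by
        rintro rfl
        rw [mul_zero] at hh0
        exact hγne hh0
      have hh0deg : deg h0 = deg Q - deg p := by
        have h1 := deg_mul (starP_ne_zero hπne) hh0ne
        rw [← hh0, hγdeg, deg_starP, hπdeg] at h1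
        omega
      set h' := comp (deg Q - deg p) h0 with hh'
      have hh'hom : ∀ w ∈ h'.coeff.support, wlen w = deg Q - deg p := isHom_comp _ _
      have hγ2 : γ = starP π * h' := by
        conv_lhs => rw [← comp_eq_self hγhom]
        rw [hh0, show deg Q = deg p + (deg Q - deg p) by omega,
          comp_mul (le_of_eq ((deg_starP π).trans hπdeg)) (le_of_eq hh0deg),
          comp_eq_self hπstarhom]
      have hherm : h' + starP h' = 0 := by
        have h2 : starP γ = starP h' * π := by
          rw [hγ2, starP_mul, starP_starP]
        have h1 : starP π * ((h' + starP h') * π) = 0 := by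
          calc starP π * ((h' + starP h') * π)
              = γ * π + starP π * starP γ := by rw [h2, hγ2]; noncomm_ring
            _ = 0 := hc0
        by_contra hne2
        exact mul_ne_zero_alg (starP_ne_zero hπne) (mul_ne_zero_alg hne2 hπne) h1
      set Q' := Q - starP p * h' with hQ'def
      have hQ'P : σ = Q' * p + starP (Q' * p) := by
        rw [hQ'def, sub_mul, starP_sub]
        have hcorr : (starP p * h') * p + starP ((starP p * h') * p)
            = starP p * ((h' + starP h') * p) := by
          rw [starP_mul, starP_mul, starP_starP]
          noncomm_ring
        have hre : (Q*p - starP p * h' * p) + (starP (Q*p) - starP (starP p * h' * p))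
            = (Q*p + starP (Q*p)) - ((starP p * h')*p + starP ((starP p * h')*p)) := by
          abel
        rw [hre, hcorr, hherm, zero_mul, mul_zero, sub_zero, ← hQP]
      have hcompQ' : comp (deg Q) Q' = 0 := by
        rw [hQ'def, comp_sub, ← hγdef,
          show deg Q = deg p + (deg Q - deg p) by omega,
          comp_mul (le_of_eq (deg_starP p)) (deg_comp_le _ _),
          comp_starP, ← hπdef, comp_eq_self hh'hom, hγ2]
        · rw [sub_self]
        -- possible leftover goals from rw chain
      have hQ'e : deg Q' < deg Q := by
        rw [deg_lt_iff (by omega : 0 < deg Q)]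
        intro w hw
        have hle : wlen w ≤ deg Q := by
          rw [hQ'def, MonoidAlgebra.coeff_sub] at hw
          rcases Finset.mem_union.mp (Finsupp.support_sub hw) with h1 | h1
          · exact wlen_le_deg h1
          · have h2 := wlen_le_deg h1
            have h3 : deg (starP p * h') ≤ deg p + (deg Q - deg p) :=
              le_trans (deg_mul_le _ _) (by
                rw [deg_starP]
                exact add_le_add le_rfl (deg_comp_le _ _))
            omega
        have hne3 : wlen w ≠ deg Q := by
          intro heqw
          have h4 : w ∈ (comp (deg Q) Q').coeff.support := mem_support_comp.mpr ⟨hw, heqw⟩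
          rw [hcompQ'] at h4
          simpa using h4
        omega
      have := hmin Q' hQ'P
      omega
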